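/- Let M_D = ⟨U, R, v⟩ be a finite serial Kripke model. Define the structure M_PPL = ⟨U, W, H, μ, v'⟩ by: for every w ∈ U, W_w = R[w], H_w = 𝒫(W_w), μ_w(V) = |V| / |R[w]| for V ⊆ W_w, and v'_w = v_w. Then M_PPL is an LPP1-model, and for every world w ∈ U and every modal formula B: M_D, w ⊨ B if and only if M_PPL, w ⊨ f(B), where f is the translation replacing every occurrence of □ with P_{≥1}. -/

import Mathlib

/-- Rationals in the unit interval `ℚ ∩ [0,1]`. -/
abbrev Prob01 : Type := {s : ℚ // 0 ≤ s ∧ s ≤ 1}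

/-- The rational `1` as an element of `ℚ ∩ [0,1]`. -/
def probOne : Prob01 := ⟨1, by norm_num⟩

/-- The formulas of LPP1 (the iterated probabilistic logic over classical
propositional logic): `A ::= p | ¬A | A ∧ A | P_{≥s} A`, `s ∈ ℚ ∩ [0,1]`. -/
inductive LPP1Form : Type where
  | atom : ℕ → LPP1Form
  | neg : LPP1Form → LPP1Form
  | conj : LPP1Form → LPP1Form → LPP1Form
  | geq : Prob01 → LPP1Form → LPP1Form

/-- An LPP1-model `⟨U, W, H, μ, v⟩` (data part): a nonempty set `U` of worlds and,
for each world `w`, a set `W_w ⊆ U`, a family `H_w` of subsets, a set function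
`μ_w`, and an evaluation `v_w`. -/
structure LPP1Model where
  U : Type
  ne : Nonempty U
  Ww : U → Set U
  Hw : U → Set (Set U)
  μw : U → Set U → ℝ
  v : U → ℕ → Bool

/-- Truth at a world: `M, w ⊨ p` iff `v_w(p) = true`; `¬`, `∧` classical;
`M, w ⊨ P_{≥s} A` iff `μ_w([A]_{M,w}) ≥ s`, where `[A]_{M,w} = {u ∈ W_w | M, u ⊨ A}`. -/
def LPP1Form.sat (M : LPP1Model) : LPP1Form → M.U → Prop
  | .atom p, w => M.v w p = true
  | .neg A, w => ¬ LPP1Form.sat M A w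
  | .conj A B, w => LPP1Form.sat M A w ∧ LPP1Form.sat M B w
  | .geq s A, w => (s.1 : ℝ) ≤ M.μw w {u ∈ M.Ww w | LPP1Form.sat M A u}

/-- `[A]_{M,w} = {u ∈ W_w | M, u ⊨ A}`. -/
def LPP1Model.truthSet (M : LPP1Model) (A : LPP1Form) (w : M.U) : Set M.U :=
  {u ∈ M.Ww w | LPP1Form.sat M A u}

/-- `M` is an LPP1-model: for every world `w`, `⟨W_w, H_w, μ_w⟩` is a probability
space (`H_w` a σ-algebra over `W_w`, `μ_w : H_w → [0,1]` σ-additive with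
`μ_w(W_w) = 1`), and `[A]_{M,w} ∈ H_w` for every formula `A` and world `w`. -/
structure IsLPP1Model (M : LPP1Model) : Prop where
  mem_sub : ∀ w : M.U, ∀ V ∈ M.Hw w, V ⊆ M.Ww w
  top_mem : ∀ w : M.U, M.Ww w ∈ M.Hw w
  compl_mem : ∀ w : M.U, ∀ V ∈ M.Hw w, M.Ww w \ V ∈ M.Hw w
  iUnion_mem : ∀ (w : M.U) (f : ℕ → Set M.U),
    (∀ k, f k ∈ M.Hw w) → (⋃ k, f k) ∈ M.Hw w
  nonneg : ∀ w : M.U, ∀ V ∈ M.Hw w, 0 ≤ M.μw w V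
  le_one : ∀ w : M.U, ∀ V ∈ M.Hw w, M.μw w V ≤ 1
  total : ∀ w : M.U, M.μw w (M.Ww w) = 1
  sigma_additive : ∀ (w : M.U) (f : ℕ → Set M.U), (∀ k, f k ∈ M.Hw w) →
    Pairwise (Function.onFun Disjoint f) →
    HasSum (fun k => M.μw w (f k)) (M.μw w (⋃ k, f k))
  meas : ∀ (A : LPP1Form) (w : M.U), M.truthSet A w ∈ M.Hw w

/-- Modal formulas: `A ::= p | ¬A | A ∧ A | □A`. -/
inductive ModalForm : Type where
  | atom : ℕ → ModalForm
  | neg : ModalForm → ModalForm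
  | conj : ModalForm → ModalForm → ModalForm
  | box : ModalForm → ModalForm

/-- A Kripke model `⟨W, R, v⟩`: a nonempty set of worlds, an accessibility
relation, and a truth assignment at each world. -/
structure KripkeModel where
  W : Type
  ne : Nonempty W
  R : W → W → Prop
  v : W → ℕ → Bool

/-- Truth in a Kripke model: `M, w ⊨ p` iff `v_w(p) = true`; `¬`, `∧` classical;
`M, w ⊨ □B` iff `M, u ⊨ B` for all `u ∈ R[w]`. -/
def ModalForm.sat (M : KripkeModel) : ModalForm → M.W → Prop
  | .atom p, w => M.v w p = true
  | .neg A, w => ¬ ModalForm.sat M A w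
  | .conj A B, w => ModalForm.sat M A w ∧ ModalForm.sat M B w
  | .box A, w => ∀ u : M.W, M.R w u → ModalForm.sat M A u

/-- A Kripke model is serial if `R[w] ≠ ∅` for every world `w`. -/
def KripkeModel.Serial (M : KripkeModel) : Prop := ∀ w : M.W, ∃ u : M.W, M.R w u

/-- The translation `f` from modal formulas to LPP1-formulas, replacing every
occurrence of `□` with `P_{≥1}`. -/
def boxToProb : ModalForm → LPP1Form
  | .atom p => .atom p
  | .neg A => .neg (boxToProb A)
  | .conj A B => .conj (boxToProb A) (boxToProb B)
  | .box A => .geq probOne (boxToProb A)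

/-- The structure `M_PPL` built from a Kripke model `D`: for every `w`,
`W_w = R[w]`, `H_w = 𝒫(W_w)`, `μ_w(V) = |V| / |R[w]|`, and `v'_w = v_w`. -/
noncomputable def toLPP1Model (D : KripkeModel) : LPP1Model where
  U := D.W
  ne := D.ne
  Ww := fun w => {u | D.R w u}
  Hw := fun w => {V | V ⊆ {u | D.R w u}}
  μw := fun w V => (Nat.card V : ℝ) / (Nat.card {u | D.R w u} : ℝ)
  v := D.v

lemma ncard_biUnion_of_disjoint {α : Type} [Finite α] (f : ℕ → Set α)
    (hd : Pairwise (Function.onFun Disjoint f)) (t : Finset ℕ) :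
    (⋃ k ∈ t, f k).ncard = ∑ k ∈ t, (f k).ncard := by
  classical
  induction t using Finset.induction_on with
  | empty => simp
  | @insert a t ha ih =>
    have hdis : Disjoint (f a) (⋃ k ∈ t, f k) :=
      Set.disjoint_iUnion₂_right.mpr fun k hk =>
        hd (by rintro rfl; exact ha hk)
    rw [Finset.set_biUnion_insert,
      Set.ncard_union_eq hdis (Set.toFinite _) (Set.toFinite _), ih,
      Finset.sum_insert ha]

lemma hasSum_ncard_iUnion {α : Type} [Finite α] (f : ℕ → Set α)
    (hd : Pairwise (Function.onFun Disjoint f)) :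
    HasSum (fun k => ((f k).ncard : ℝ)) ((⋃ k, f k).ncard : ℝ) := by
  classical
  have hS : {k | (f k).Nonempty}.Finite := by
    have : Function.Injective (fun k : {k // (f k).Nonempty} => k.2.choose) := by
      rintro ⟨i, hi⟩ ⟨j, hj⟩ h
      ext
      by_contra hij
      have h' : hi.choose = hj.choose := h
      exact Set.disjoint_left.mp (hd hij) hi.choose_spec (h' ▸ hj.choose_spec)
    have hfin : Finite {k // (f k).Nonempty} := Finite.of_injective _ this
    exact Set.finite_coe_iff.mp hfin
  have hcover : (⋃ k, f k) = ⋃ k ∈ hS.toFinset, f k := by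
    ext u
    simp only [Set.mem_iUnion, exists_prop, Set.Finite.mem_toFinset,
      Set.mem_setOf_eq]
    exact ⟨fun ⟨k, hk⟩ => ⟨k, ⟨u, hk⟩, hk⟩, fun ⟨k, _, hk⟩ => ⟨k, hk⟩⟩
  have := hasSum_sum_of_ne_finset_zero
    (f := fun k => ((f k).ncard : ℝ)) (s := hS.toFinset) (L := SummationFilter.unconditional ℕ)
    (by
      intro k hk
      have : f k = ∅ := Set.not_nonempty_iff_eq_empty.mp
        (by simpa using hk)
      simp [this])
  rw [hcover, ncard_biUnion_of_disjoint f hd, Nat.cast_sum]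
  exact this

/-- Let `M_D = ⟨U, R, v⟩` be a finite serial Kripke model and let `M_PPL` be the
structure defined by `W_w = R[w]`, `H_w = 𝒫(W_w)`, `μ_w(V) = |V|/|R[w]|`,
`v'_w = v_w`. Then `M_PPL` is an LPP1-model, and for every world `w` and every
modal formula `B`: `M_D, w ⊨ B` iff `M_PPL, w ⊨ f(B)`, where `f` replaces every
occurrence of `□` with `P_{≥1}`. -/
theorem serial_kripke_to_lpp1 (D : KripkeModel) (hfin : Finite D.W)
    (hser : D.Serial) :
    IsLPP1Model (toLPP1Model D) ∧
      ∀ (w : D.W) (B : ModalForm),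
        ModalForm.sat D B w ↔ LPP1Form.sat (toLPP1Model D) (boxToProb B) w := by
  haveI := hfin
  haveI : Finite (toLPP1Model D).U := hfin
  have hcard : ∀ w : D.W, 0 < ({u | D.R w u} : Set D.W).ncard := by
    intro w
    obtain ⟨u, hu⟩ := hser w
    exact (Set.ncard_pos (Set.toFinite _)).mpr ⟨u, hu⟩
  have hcardR : ∀ w : D.W, (0 : ℝ) < (({u | D.R w u} : Set D.W).ncard : ℝ) :=
    fun w => by exact_mod_cast hcard w
  have hμ : ∀ (w : D.W) (V : Set D.W),
      (toLPP1Model D).μw w V = ((V.ncard : ℝ) / (({u | D.R w u} : Set D.W).ncard : ℝ)) := by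
    intro w V
    show (Nat.card V : ℝ) / (Nat.card {u | D.R w u} : ℝ) = _
    rw [Nat.card_coe_set_eq, Nat.card_coe_set_eq]
  constructor
  · constructor
    · exact fun w V hV => hV
    · exact fun w x hx => hx
    · exact fun w V hV => Set.diff_subset
    · exact fun w f hf => Set.iUnion_subset hf
    · intro w V hV
      rw [hμ w V]
      positivity
    · intro w V hV
      rw [hμ w V, div_le_one (hcardR w)]
      exact_mod_cast Set.ncard_le_ncard hV (Set.toFinite _)
    · intro w
      rw [hμ w ((toLPP1Model D).Ww w)]
      exact div_self (ne_of_gt (hcardR w))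
    · intro w f hf hd
      have h := (hasSum_ncard_iUnion f hd).div_const (({u | D.R w u} : Set D.W).ncard : ℝ)
      have e : (fun k => (toLPP1Model D).μw w (f k))
          = fun k => ((f k).ncard : ℝ) / (({u | D.R w u} : Set D.W).ncard : ℝ) :=
        funext fun k => hμ w (f k)
      have e2 : (toLPP1Model D).μw w (⋃ k, f k)
          = ((⋃ k, f k).ncard : ℝ) / (({u | D.R w u} : Set D.W).ncard : ℝ) := hμ w _
      rw [e, e2]
      exact h
    · intro A w u hu
      exact hu.1
  · intro w B
    induction B generalizing w with
    | atom p => exact Iff.rfl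
    | neg A ih => exact not_congr (ih w)
    | conj A B ihA ihB => exact and_congr (ihA w) (ihB w)
    | box A ih =>
      show (∀ u, D.R w u → _) ↔ ((probOne.1 : ℝ) ≤ _)
      have hset : {u ∈ (toLPP1Model D).Ww w |
          LPP1Form.sat (toLPP1Model D) (boxToProb A) u}
          = {u | D.R w u ∧ ModalForm.sat D A u} := by
        ext u
        simp only [toLPP1Model, Set.mem_setOf_eq]
        exact and_congr_right fun _ => (ih u).symm
      rw [hset]
      have hle : ((probOne.1 : ℝ)) = 1 := by norm_num [probOne]
      rw [hle, hμ, le_div_iff₀ (hcardR w), one_mul]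
      constructor
      · intro h
        have : {u | D.R w u ∧ ModalForm.sat D A u} = {u | D.R w u} := by
          ext u; exact ⟨fun hu => hu.1, fun hu => ⟨hu, h u hu⟩⟩
        rw [this]
      · intro h u hu
        have hsub : {u | D.R w u ∧ ModalForm.sat D A u} ⊆ {u | D.R w u} :=
          fun x hx => hx.1
        have heq := Set.eq_of_subset_of_ncard_le hsub
          (by exact_mod_cast h) (Set.toFinite _)
        exact (heq ▸ hu : u ∈ {u | D.R w u ∧ ModalForm.sat D A u}).2
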